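/- For any X ∈ ℝ^{n×p}, y ∈ ℝⁿ and λ > 0, strong duality holds for the ℓ₁²-penalized least squares problem: inf_{β ∈ ℝᵖ} { (1/n)·‖y − Xβ‖₂² + 2λ·‖β‖₁² } = sup_{u ∈ ℝⁿ} { (1/n)·(‖y‖₂² − ‖y − u‖₂²) − (1/(2λ))·‖(1/n)·Xᵀu‖_∞² }. -/

import Mathlib

open MeasureTheory ProbabilityTheory Matrix
open scoped ENNReal

noncomputable section

/-- squared Euclidean norm on ℝⁿ -/
def l2sq {n : ℕ} (v : Fin n → ℝ) : ℝ := ∑ i, (v i) ^ 2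

/-- ℓ₁ norm on ℝᵖ -/
def l1 {p : ℕ} (b : Fin p → ℝ) : ℝ := ∑ j, |b j|

/-- sup norm on ℝᵖ -/
def linf {p : ℕ} (v : Fin p → ℝ) : ℝ := ⨆ j, |v j|

section Aux

lemma OL.sum_sq_sub {n : ℕ} (u w : Fin n → ℝ) (t : ℝ) :
    ∑ i, (u i - t * w i)^2
      = (∑ i, (u i)^2) - 2*t*(∑ i, u i * w i) + t^2 * ∑ i, (w i)^2 := by
  rw [Finset.mul_sum, Finset.mul_sum, ← Finset.sum_sub_distrib, ← Finset.sum_add_distrib]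
  exact Finset.sum_congr rfl fun i _ => by ring

lemma OL.master {n : ℕ} (v w z : Fin n → ℝ) :
    (∑ i, (v i - w i)^2) + (∑ i, (v i - z i)^2) + 2*(∑ i, w i * z i)
      = (∑ i, (v i)^2) + ∑ i, (v i - w i - z i)^2 := by
  rw [Finset.mul_sum, ← Finset.sum_add_distrib, ← Finset.sum_add_distrib,
    ← Finset.sum_add_distrib]
  exact Finset.sum_congr rfl fun i _ => by ring

lemma OL.dot_transfer {n p : ℕ} (X : Matrix (Fin n) (Fin p) ℝ) (β : Fin p → ℝ)
    (u : Fin n → ℝ) :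
    ∑ i, X.mulVec β i * u i = ∑ j, β j * Xᵀ.mulVec u j := by
  simp only [Matrix.mulVec, dotProduct, Matrix.transpose_apply, Finset.sum_mul,
    Finset.mul_sum]
  rw [Finset.sum_comm]
  exact Finset.sum_congr rfl fun j _ => Finset.sum_congr rfl fun i _ => by ring

lemma OL.linf_nonneg {p : ℕ} (v : Fin p → ℝ) : 0 ≤ linf v :=
  Real.iSup_nonneg fun _ => abs_nonneg _

lemma OL.abs_le_linf {p : ℕ} (v : Fin p → ℝ) (j : Fin p) : |v j| ≤ linf v := by
  exact le_ciSup (Set.Finite.bddAbove (Set.finite_range fun k => |v k|)) j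

lemma OL.l1_nonneg {p : ℕ} (b : Fin p → ℝ) : 0 ≤ l1 b :=
  Finset.sum_nonneg fun _ _ => abs_nonneg _

lemma OL.l2sq_nonneg {n : ℕ} (v : Fin n → ℝ) : 0 ≤ l2sq v :=
  Finset.sum_nonneg fun _ _ => sq_nonneg _

lemma OL.l2sq_sub {n : ℕ} (y w : Fin n → ℝ) : l2sq (y - w) = ∑ i, (y i - w i)^2 := by
  simp [l2sq]

lemma OL.quad_zero (A B : ℝ) (h : ∀ t : ℝ, |t| ≤ 1 → 0 ≤ A * t^2 + B * t) : B = 0 := by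
  by_contra hB
  have hA : 0 ≤ A := by
    nlinarith [h 1 (by norm_num), h (-1) (by norm_num)]
  have hBpos : 0 < |B| := abs_pos.mpr hB
  set c : ℝ := 1 / ((A+1)*(|B|+1)) with hc
  have hc0 : 0 < c := by positivity
  have ht : |(-B*c)| ≤ 1 := by
    rw [abs_mul, abs_neg, abs_of_pos hc0, hc]
    rw [mul_one_div, div_le_one (by positivity)]
    nlinarith [abs_nonneg B]
  have hAc : A * c < 1 := by
    rw [hc, mul_one_div, div_lt_one (by positivity)]
    nlinarith [abs_nonneg B]
  have hv := h (-B*c) ht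
  have hB2 : 0 < B^2 := by positivity
  nlinarith [mul_pos (mul_pos hB2 hc0) (sub_pos.mpr hAc)]

lemma OL.abs_le_of_small (w C D : ℝ) (hC : 0 ≤ C)
    (h : ∀ t : ℝ, t * w ≤ C * t^2 + D * |t|) : |w| ≤ D := by
  apply le_of_forall_pos_le_add
  intro ε hε
  set s := ε / (C+1) with hs
  have hs0 : 0 < s := by positivity
  have key : s * |w| ≤ C * s^2 + D * s := by
    rcases le_or_gt 0 w with hw | hw
    · have := h s
      rw [abs_of_pos hs0] at this
      rw [abs_of_nonneg hw]; linarith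
    · have := h (-s)
      rw [abs_neg, abs_of_pos hs0] at this
      rw [abs_of_neg hw]; nlinarith
  have h2 : |w| ≤ C * s + D := by
    have h3 : s * |w| ≤ s * (C * s + D) := key.trans_eq (by ring)
    exact le_of_mul_le_mul_left h3 hs0
  have hCs : C * s ≤ ε := by
    rw [hs, mul_div_assoc', div_le_iff₀ (by positivity)]
    nlinarith
  linarith

lemma OL.weak_duality {n p : ℕ} (hn : 0 < n) (X : Matrix (Fin n) (Fin p) ℝ)
    (y : Fin n → ℝ) (lam : ℝ) (hlam : 0 < lam) (β : Fin p → ℝ) (u : Fin n → ℝ) :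
    (1/(n:ℝ)) * (l2sq y - l2sq (y - u)) - (1/(2*lam)) * (linf ((n:ℝ)⁻¹ • Xᵀ.mulVec u))^2
      ≤ (1/(n:ℝ)) * l2sq (y - X.mulVec β) + 2*lam * (l1 β)^2 := by
  have hN : (0:ℝ) < n := Nat.cast_pos.mpr hn
  set N1 : ℝ := 1/(n:ℝ) with hN1def
  have hN1 : 0 < N1 := by positivity
  set a := l1 β with ha
  set b := linf ((n:ℝ)⁻¹ • Xᵀ.mulVec u) with hb
  have ha0 : 0 ≤ a := OL.l1_nonneg β
  have hb0 : 0 ≤ b := OL.linf_nonneg _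
  set d := ∑ i, X.mulVec β i * u i with hd
  have hdot : N1 * d ≤ a * b := by
    have h1 : d = (n:ℝ) * ∑ j, β j * ((n:ℝ)⁻¹ • Xᵀ.mulVec u) j := by
      rw [hd, OL.dot_transfer, Finset.mul_sum]
      exact Finset.sum_congr rfl fun j _ => by
        simp only [Pi.smul_apply, smul_eq_mul]
        field_simp
    have h2 : ∑ j, β j * ((n:ℝ)⁻¹ • Xᵀ.mulVec u) j ≤ a * b := by
      rw [ha, l1, Finset.sum_mul]
      apply Finset.sum_le_sum
      intro j _
      calc β j * ((n:ℝ)⁻¹ • Xᵀ.mulVec u) j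
          ≤ |β j * ((n:ℝ)⁻¹ • Xᵀ.mulVec u) j| := le_abs_self _
        _ = |β j| * |((n:ℝ)⁻¹ • Xᵀ.mulVec u) j| := abs_mul _ _
        _ ≤ |β j| * b := mul_le_mul_of_nonneg_left (OL.abs_le_linf _ j) (abs_nonneg _)
    calc N1 * d = (N1 * (n:ℝ)) * ∑ j, β j * ((n:ℝ)⁻¹ • Xᵀ.mulVec u) j := by rw [h1]; ring
      _ = ∑ j, β j * ((n:ℝ)⁻¹ • Xᵀ.mulVec u) j := by rw [hN1def]; field_simp
      _ ≤ a * b := h2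
  set s1 := l2sq (y - X.mulVec β) with hs1
  set s2 := l2sq y with hs2
  set s3 := l2sq (y - u) with hs3
  set s4 := ∑ i, (y i - X.mulVec β i - u i)^2 with hs4
  have hms : s1 + s3 + 2*d = s2 + s4 := by
    rw [hs1, hs2, hs3, hs4, hd, OL.l2sq_sub, OL.l2sq_sub, l2sq]
    exact OL.master y (X.mulVec β) u
  have hs40 : 0 ≤ s4 := Finset.sum_nonneg fun i _ => sq_nonneg _
  have hsq : 0 ≤ 2*lam*a^2 - 2*(a*b) + (1/(2*lam))*b^2 := by
    have h3 : 2*lam*a^2 - 2*(a*b) + (1/(2*lam))*b^2 = (2*lam*a - b)^2 / (2*lam) := by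
      field_simp; ring
    rw [h3]; positivity
  have e1 : N1 * (s2 - s3) = N1 * s1 + 2*(N1*d) - N1 * s4 := by
    have : s2 - s3 = s1 + 2*d - s4 := by linarith
    rw [this]; ring
  have e2 : 0 ≤ N1 * s4 := mul_nonneg hN1.le hs40
  nlinarith [hdot, hsq, e2, e1]

lemma OL.strong_at_min {n p : ℕ} (hn : 0 < n) (X : Matrix (Fin n) (Fin p) ℝ)
    (y : Fin n → ℝ) (lam : ℝ) (hlam : 0 < lam) (β₀ : Fin p → ℝ)
    (hmin : ∀ β : Fin p → ℝ,
      (1/(n:ℝ)) * l2sq (y - X.mulVec β₀) + 2*lam * (l1 β₀)^2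
        ≤ (1/(n:ℝ)) * l2sq (y - X.mulVec β) + 2*lam * (l1 β)^2) :
    (1/(n:ℝ)) * l2sq (y - X.mulVec β₀) + 2*lam * (l1 β₀)^2
      ≤ (1/(n:ℝ)) * (l2sq y - l2sq (y - (y - X.mulVec β₀)))
          - (1/(2*lam)) * (linf ((n:ℝ)⁻¹ • Xᵀ.mulVec (y - X.mulVec β₀)))^2 := by
  have hN : (0:ℝ) < n := Nat.cast_pos.mpr hn
  set N1 : ℝ := 1/(n:ℝ) with hN1def
  have hN1 : 0 < N1 := by positivity
  set u : Fin n → ℝ := y - X.mulVec β₀ with hu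
  have hui : ∀ i, u i = y i - X.mulVec β₀ i := fun i => rfl
  set a := l1 β₀ with ha
  have ha0 : 0 ≤ a := OL.l1_nonneg β₀
  set su := l2sq (y - X.mulVec β₀) with hsu
  have hsu' : su = ∑ i, (u i)^2 := by
    rw [hsu, OL.l2sq_sub]
    exact Finset.sum_congr rfl fun i _ => by rw [hui i]
  set d := ∑ i, u i * X.mulVec β₀ i with hd
  set q := ∑ i, (X.mulVec β₀ i)^2 with hq
  have hq0 : 0 ≤ q := Finset.sum_nonneg fun i _ => sq_nonneg _
  -- expansion along scaling direction
  have hexp : ∀ t : ℝ, l2sq (y - X.mulVec ((1+t) • β₀)) = su - 2*t*d + t^2*q := by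
    intro t
    have h1 : l2sq (y - X.mulVec ((1+t) • β₀)) = ∑ i, (u i - t * X.mulVec β₀ i)^2 := by
      rw [OL.l2sq_sub]
      refine Finset.sum_congr rfl fun i _ => ?_
      rw [Matrix.mulVec_smul]
      simp only [Pi.smul_apply, smul_eq_mul, hui]
      ring
    rw [h1, OL.sum_sq_sub, hsu', hd, hq]
  have hl1exp : ∀ t : ℝ, |t| ≤ 1 → l1 ((1+t) • β₀) = (1+t) * a := by
    intro t ht
    have h1t : 0 ≤ 1 + t := by
      rcases abs_le.mp ht with ⟨h, _⟩; linarith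
    rw [ha, l1, l1, Finset.mul_sum]
    refine Finset.sum_congr rfl fun j _ => ?_
    simp only [Pi.smul_apply, smul_eq_mul, abs_mul, abs_of_nonneg h1t]
  -- (B) : N1 * d = 2*lam*a^2
  have hB : N1 * d = 2*lam*a^2 := by
    have hqz := OL.quad_zero (N1*q + 2*lam*a^2) (-(2*(N1*d)) + 4*lam*a^2) ?_
    · linarith
    · intro t ht
      have h3 := hmin ((1+t) • β₀)
      rw [hexp t, hl1exp t ht] at h3
      nlinarith [h3]
  -- (A) : linf bound
  set b := linf ((n:ℝ)⁻¹ • Xᵀ.mulVec u) with hb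
  have hb0 : 0 ≤ b := OL.linf_nonneg _
  have hA : b ≤ 2*lam*a := by
    rw [hb]
    apply Real.iSup_le _ (by positivity)
    intro j
    set w := Xᵀ.mulVec u j with hw
    have hwj : ((n:ℝ)⁻¹ • Xᵀ.mulVec u) j = N1 * w := by
      simp only [Pi.smul_apply, smul_eq_mul, hN1def, hw, one_div]
    rw [hwj]
    set cj := ∑ i, (X i j)^2 with hcj
    have hcj0 : 0 ≤ cj := Finset.sum_nonneg fun i _ => sq_nonneg _
    have key : ∀ t : ℝ, t * (2*(N1*w)) ≤ (N1*cj + 2*lam) * t^2 + (4*lam*a) * |t| := by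
      intro t
      set βt : Fin p → ℝ := fun k => β₀ k + (if k = j then t else 0) with hβt
      have hmv : ∀ i, X.mulVec βt i = X.mulVec β₀ i + t * X i j := by
        intro i
        simp only [Matrix.mulVec, dotProduct, hβt, mul_add, mul_ite, mul_zero,
          Finset.sum_add_distrib, Finset.sum_ite_eq', Finset.mem_univ, if_true]
        ring
      have h1 : l2sq (y - X.mulVec βt) = su - 2*t*(∑ i, u i * X i j) + t^2*cj := by
        rw [OL.l2sq_sub]
        have : ∀ i, y i - X.mulVec βt i = u i - t * X i j := by
          intro i; rw [hmv i, hui i]; ring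
        calc ∑ i, (y i - X.mulVec βt i)^2 = ∑ i, (u i - t * X i j)^2 :=
              Finset.sum_congr rfl fun i _ => by rw [this i]
          _ = _ := by rw [OL.sum_sq_sub, hsu', hcj]
      have hwsum : ∑ i, u i * X i j = w := by
        rw [hw]
        simp only [Matrix.mulVec, dotProduct, Matrix.transpose_apply]
        exact Finset.sum_congr rfl fun i _ => mul_comm _ _
      have hl1t : l1 βt ≤ a + |t| := by
        rw [ha, l1, l1]
        have : ∀ j' : Fin p, |βt j'| ≤ |β₀ j'| + (if j' = j then |t| else 0) := by
          intro j'
          by_cases h : j' = j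
          · simp only [hβt, h, if_true]
            exact abs_add_le _ _
          · simp [hβt, h]
        calc ∑ j', |βt j'| ≤ ∑ j', (|β₀ j'| + (if j' = j then |t| else 0)) :=
              Finset.sum_le_sum fun j' _ => this j'
          _ = a + |t| := by
              rw [Finset.sum_add_distrib, Finset.sum_ite_eq', ha, l1]
              simp
      have hl1sq : (l1 βt)^2 ≤ (a + |t|)^2 :=
        pow_le_pow_left₀ (OL.l1_nonneg βt) hl1t 2
      have h3 := hmin βt
      rw [h1, hwsum] at h3
      have habs : |t|^2 = t^2 := sq_abs t
      nlinarith [h3, hl1sq, mul_le_mul_of_nonneg_left hl1sq (by positivity : (0:ℝ) ≤ 2*lam)]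
    have hsmall := OL.abs_le_of_small (2*(N1*w)) (N1*cj + 2*lam) (4*lam*a)
      (add_nonneg (mul_nonneg hN1.le hcj0) (by positivity)) key
    have h2 : |(2:ℝ)| = 2 := by norm_num
    rw [abs_mul, h2, abs_mul, abs_of_pos hN1] at hsmall
    rw [abs_mul, abs_of_pos hN1]
    linarith
  -- assemble
  have hmsz : su + l2sq (y - u) + 2*d = l2sq y := by
    have hm := OL.master y (X.mulVec β₀) u
    have hz : ∑ i, (y i - X.mulVec β₀ i - u i)^2 = 0 := by
      refine Finset.sum_eq_zero fun i _ => ?_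
      rw [hui i]; ring
    rw [hz, add_zero] at hm
    have hd' : ∑ i, X.mulVec β₀ i * u i = d := by
      rw [hd]; exact Finset.sum_congr rfl fun i _ => mul_comm _ _
    rw [hd'] at hm
    have e1 : su = ∑ i, (y i - X.mulVec β₀ i)^2 := by rw [hsu, OL.l2sq_sub]
    have e2 : l2sq (y - u) = ∑ i, (y i - u i)^2 := OL.l2sq_sub y u
    have e3 : l2sq y = ∑ i, (y i)^2 := rfl
    rw [e1, e2, e3]
    exact hm
  have hbsq : (1/(2*lam)) * b^2 ≤ 2*lam*a^2 := by
    have h4 : b^2 ≤ (2*lam*a)^2 := pow_le_pow_left₀ hb0 hA 2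
    have h5 : (1/(2*lam)) * (2*lam*a)^2 = 2*lam*a^2 := by field_simp
    calc (1/(2*lam)) * b^2 ≤ (1/(2*lam)) * (2*lam*a)^2 :=
          mul_le_mul_of_nonneg_left h4 (by positivity)
      _ = 2*lam*a^2 := h5
  -- final goal
  have e1 : l2sq y - l2sq (y - u) = su + 2*d := by linarith
  show N1 * su + 2*lam*a^2 ≤ N1 * (l2sq y - l2sq (y - u)) - (1/(2*lam)) * b^2
  rw [e1]
  have e2 : N1 * (su + 2*d) = N1*su + 2*(N1*d) := by ring
  rw [e2, hB]
  linarith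

lemma OL.exists_min {n p : ℕ} (hn : 0 < n) (X : Matrix (Fin n) (Fin p) ℝ)
    (y : Fin n → ℝ) (lam : ℝ) (hlam : 0 < lam) :
    ∃ β₀ : Fin p → ℝ, ∀ β : Fin p → ℝ,
      (1/(n:ℝ)) * l2sq (y - X.mulVec β₀) + 2*lam * (l1 β₀)^2
        ≤ (1/(n:ℝ)) * l2sq (y - X.mulVec β) + 2*lam * (l1 β)^2 := by
  have hN : (0:ℝ) < n := Nat.cast_pos.mpr hn
  set P : (Fin p → ℝ) → ℝ := fun β => (1/(n:ℝ)) * l2sq (y - X.mulVec β) + 2*lam * (l1 β)^2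
    with hP
  have hPcont : Continuous P := by
    have h1 : Continuous fun β : Fin p → ℝ => X.mulVec β :=
      LinearMap.continuous_of_finiteDimensional (Matrix.mulVecLin X)
    have h2 : Continuous fun v : Fin n → ℝ => l2sq v := by
      unfold l2sq
      exact continuous_finset_sum _ fun i _ => (continuous_apply i).pow 2
    have h3 : Continuous fun β : Fin p → ℝ => l1 β := by
      unfold l1
      exact continuous_finset_sum _ fun j _ => (continuous_apply j).abs
    exact (continuous_const.mul (h2.comp (continuous_const.sub h1))).add
      (continuous_const.mul (h3.pow 2))
  have hlow : ∀ β : Fin p → ℝ, 2*lam * ‖β‖^2 ≤ P β := by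
    intro β
    have hnorm : ‖β‖ ≤ l1 β := by
      rcases isEmpty_or_nonempty (Fin p) with h | h
      · have hβ0 : β = 0 := funext fun j => (h.false j).elim
        rw [hβ0, norm_zero]
        exact OL.l1_nonneg 0
      · rw [pi_norm_le_iff_of_nonneg (OL.l1_nonneg β)]
        intro j
        rw [Real.norm_eq_abs]
        exact Finset.single_le_sum (f := fun k => |β k|) (fun k _ => abs_nonneg _)
          (Finset.mem_univ j)
    have h1 : ‖β‖^2 ≤ (l1 β)^2 := by
      have := norm_nonneg β
      nlinarith
    have h2 : 0 ≤ (1/(n:ℝ)) * l2sq (y - X.mulVec β) :=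
      mul_nonneg (by positivity) (OL.l2sq_nonneg _)
    rw [hP]
    nlinarith
  set R : ℝ := Real.sqrt (P 0 / (2*lam)) + 1 with hR
  have hP00 : 0 ≤ P 0 := le_trans (by positivity) (hlow 0)
  have hR0 : 0 < R := by positivity
  have hRbig : P 0 < 2*lam*R^2 := by
    have hs : Real.sqrt (P 0 / (2*lam)) ^2 = P 0 / (2*lam) :=
      Real.sq_sqrt (by positivity)
    have hsn : 0 ≤ Real.sqrt (P 0 / (2*lam)) := Real.sqrt_nonneg _
    have h6 : 2*lam * (Real.sqrt (P 0 / (2*lam)))^2 = P 0 := by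
      rw [hs]; field_simp
    rw [hR]
    nlinarith [h6, hsn, hlam, mul_nonneg hlam.le hsn]
  have hcomp : IsCompact (Metric.closedBall (0 : Fin p → ℝ) R) := isCompact_closedBall _ _
  have hne : (Metric.closedBall (0 : Fin p → ℝ) R).Nonempty :=
    ⟨0, Metric.mem_closedBall_self hR0.le⟩
  obtain ⟨β₀, hβ₀K, hβ₀min⟩ := hcomp.exists_isMinOn hne hPcont.continuousOn
  refine ⟨β₀, fun β => ?_⟩
  by_cases hβ : β ∈ Metric.closedBall (0 : Fin p → ℝ) R
  · exact hβ₀min hβ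
  · have h0 : P β₀ ≤ P 0 := hβ₀min (Metric.mem_closedBall_self hR0.le)
    have hout : R < ‖β‖ := by
      rw [Metric.mem_closedBall, dist_zero_right, not_le] at hβ
      exact hβ
    have hPb : P 0 < P β := by
      have h1 := hlow β
      have h2 : 0 < (‖β‖ - R) * (‖β‖ + R) :=
        mul_pos (sub_pos.mpr hout) (by positivity)
      nlinarith [h1, hRbig, h2, hlam]
    show P β₀ ≤ P β
    linarith

end Aux

/-- strong duality for the ℓ₁²-penalized least squares problem. -/
theorem organic_lasso_strong_duality {n p : ℕ} (hn : 0 < n)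
    (X : Matrix (Fin n) (Fin p) ℝ) (y : Fin n → ℝ) (lam : ℝ) (hlam : 0 < lam) :
    (⨅ β : Fin p → ℝ, (1/n) * l2sq (y - X.mulVec β) + 2*lam * (l1 β)^2)
      = ⨆ u : Fin n → ℝ, ((1/n) * (l2sq y - l2sq (y - u))
          - (1/(2*lam)) * (linf ((n:ℝ)⁻¹ • Xᵀ.mulVec u))^2) := by
  obtain ⟨β₀, hmin⟩ := OL.exists_min hn X y lam hlam
  have hstrong := OL.strong_at_min hn X y lam hlam β₀ hmin
  apply le_antisymm
  · -- inf ≤ sup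
    have hbddB : BddBelow (Set.range fun β : Fin p → ℝ =>
        (1/(n:ℝ)) * l2sq (y - X.mulVec β) + 2*lam * (l1 β)^2) := by
      refine ⟨0, ?_⟩
      rintro v ⟨β, rfl⟩
      have := OL.l2sq_nonneg (y - X.mulVec β)
      have := OL.l1_nonneg β
      have hN : (0:ℝ) < n := Nat.cast_pos.mpr hn
      positivity
    have hbddA : BddAbove (Set.range fun u : Fin n → ℝ =>
        (1/(n:ℝ)) * (l2sq y - l2sq (y - u))
          - (1/(2*lam)) * (linf ((n:ℝ)⁻¹ • Xᵀ.mulVec u))^2) := by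
      refine ⟨(1/(n:ℝ)) * l2sq (y - X.mulVec β₀) + 2*lam * (l1 β₀)^2, ?_⟩
      rintro v ⟨u, rfl⟩
      exact OL.weak_duality hn X y lam hlam β₀ u
    calc (⨅ β : Fin p → ℝ, (1/(n:ℝ)) * l2sq (y - X.mulVec β) + 2*lam * (l1 β)^2)
        ≤ (1/(n:ℝ)) * l2sq (y - X.mulVec β₀) + 2*lam * (l1 β₀)^2 := ciInf_le hbddB β₀
      _ ≤ (1/(n:ℝ)) * (l2sq y - l2sq (y - (y - X.mulVec β₀)))
            - (1/(2*lam)) * (linf ((n:ℝ)⁻¹ • Xᵀ.mulVec (y - X.mulVec β₀)))^2 := hstrong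
      _ ≤ _ := le_ciSup hbddA (y - X.mulVec β₀)
  · -- sup ≤ inf
    apply ciSup_le
    intro u
    apply le_ciInf
    intro β
    exact OL.weak_duality hn X y lam hlam β u
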